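/- If M = [[A, B],[B', D]] is a symmetric positive definite real matrix partitioned into blocks, then M⁻¹ - [[A⁻¹, 0],[0, 0]] is positive semidefinite, i.e., M⁻¹ ≥ [[A⁻¹, 0],[0, 0]] in the Loewner order. -/

import Mathlib

open Matrix

theorem inverse_loewner_lower_bound
    (m k : ℕ) (A : Matrix (Fin m) (Fin m) ℝ) (B : Matrix (Fin m) (Fin k) ℝ)
    (D : Matrix (Fin k) (Fin k) ℝ)
    (hM : (Matrix.fromBlocks A B Bᵀ D).PosDef) :
    ((Matrix.fromBlocks A B Bᵀ D)⁻¹ - Matrix.fromBlocks A⁻¹ 0 0 0).PosSemidef := by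
  set M := Matrix.fromBlocks A B Bᵀ D with hMdef
  -- A is positive definite
  have hA : A.PosDef := by
    refine posDef_iff_dotProduct_mulVec.mpr ⟨?_, ?_⟩
    · have h := hM.1
      have : (Matrix.fromBlocks A B Bᵀ D)ᴴ = Matrix.fromBlocks A B Bᵀ D := h
      rw [fromBlocks_conjTranspose] at this
      have := (fromBlocks_inj.mp this).1
      simpa [IsHermitian] using this
    · intro x hx
      have hx' : Sum.elim x (0 : Fin k → ℝ) ≠ 0 := by
        intro h
        apply hx
        funext i
        exact congrFun h (Sum.inl i)
      have := hM.dotProduct_mulVec_pos hx'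
      rw [hMdef] at this
      simpa [fromBlocks_mulVec, dotProduct] using this
  have hAdet : IsUnit A.det := isUnit_iff_ne_zero.mpr hA.det_pos.ne'
  have : Invertible A := A.invertibleOfIsUnitDet hAdet
  have hMdet : IsUnit M.det := isUnit_iff_ne_zero.mpr hM.det_pos.ne'
  have hMinv : Invertible M := M.invertibleOfIsUnitDet hMdet
  -- Schur complement is PSD
  have hS : (D - Bᵀ * A⁻¹ * B).PosSemidef := by
    have := (PosDef.fromBlocks₁₁ B D hA).mp
    simp only [conjTranspose_eq_transpose_of_trivial] at this
    exact this hM.posSemidef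
  set S := D - Bᵀ * A⁻¹ * B with hSdef
  -- fromBlocks 0 0 0 S is PSD
  have hS0 : (Matrix.fromBlocks (0 : Matrix (Fin m) (Fin m) ℝ) 0 0 S).PosSemidef := by
    refine posSemidef_iff_dotProduct_mulVec.mpr ⟨?_, ?_⟩
    · have h := hS.1
      simp only [IsHermitian, fromBlocks_conjTranspose, conjTranspose_zero]
      rw [h]
    · intro x
      have := hS.dotProduct_mulVec_nonneg (x ∘ Sum.inr)
      rw [← Sum.elim_comp_inl_inr x]
      simpa [fromBlocks_mulVec, dotProduct] using this
  -- key identity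
  have hMN : M * Matrix.fromBlocks A⁻¹ 0 0 0 * M = Matrix.fromBlocks A B Bᵀ (Bᵀ * A⁻¹ * B) := by
    rw [hMdef]
    simp [fromBlocks_multiply, Matrix.mul_nonsing_inv A hAdet,
      Matrix.mul_assoc, Matrix.nonsing_inv_mul A hAdet]
  have hkey : M⁻¹ - Matrix.fromBlocks A⁻¹ 0 0 0
      = M⁻¹ * Matrix.fromBlocks (0 : Matrix (Fin m) (Fin m) ℝ) 0 0 S * M⁻¹ := by
    have hblock : Matrix.fromBlocks (0 : Matrix (Fin m) (Fin m) ℝ) 0 0 S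
        = M - M * Matrix.fromBlocks A⁻¹ 0 0 0 * M := by
      rw [hMN, hMdef, hSdef]
      ext (i | i) (j | j) <;> simp [fromBlocks]
    rw [hblock]
    have h1 : M⁻¹ * M = 1 := Matrix.nonsing_inv_mul M hMdet
    have h2 : M * M⁻¹ = 1 := Matrix.mul_nonsing_inv M hMdet
    rw [Matrix.mul_sub, Matrix.sub_mul]
    rw [show M⁻¹ * M * M⁻¹ = M⁻¹ by rw [h1, Matrix.one_mul]]
    congr 1
    rw [show M⁻¹ * (M * Matrix.fromBlocks A⁻¹ 0 0 0 * M)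
        = Matrix.fromBlocks A⁻¹ 0 0 0 * M by
      rw [← Matrix.mul_assoc, ← Matrix.mul_assoc, h1, Matrix.one_mul]]
    rw [Matrix.mul_assoc, h2, Matrix.mul_one]
  rw [hkey]
  have hMinvH : (M⁻¹)ᴴ = M⁻¹ := (hM.1.inv).eq
  have := hS0.mul_mul_conjTranspose_same M⁻¹
  rwa [hMinvH] at this
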